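/- Fix λ ∈ ℝ, λ ≠ 0, β > 0, and let I = diag(A,B,C) be a positive-definite diagonal 3×3 matrix. Suppose (λ²/β²)(C−A) ≠ 1 and (λ²/β²)(C−B) ≠ 1. Then the set of pairs (ω, z) ∈ ℝ³ × ℝ³ satisfying the system −λ e₃ × (I ω) + e₃ × (λ C ω − β² z) = 0 and −ω × e₃ − λ e₃ × z = 0 is exactly {(r e₃, z e₃) : r, z ∈ ℝ}; in particular this solution set is a 2-dimensional subspace of ℝ³ × ℝ³. -/
import Mathlib


open Matrix

/-- `e₃ = (0,0,1)`. -/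
noncomputable def e3 : Fin 3 → ℝ := ![0, 0, 1]

/-- `I·w = (A w₁, B w₂, C w₃)` for `I = diag(A,B,C)`. -/
noncomputable def Iv (A B C : ℝ) (w : Fin 3 → ℝ) : Fin 3 → ℝ := ![A * w 0, B * w 1, C * w 2]

/-- If `K_A ≠ 1` and `K_B ≠ 1`, the solution set of
`−λ e₃ × (Iω) + e₃ × (λCω − β²z) = 0`, `−ω × e₃ − λ e₃ × z = 0`
is exactly `{(r e₃, s e₃)}`, a 2-dimensional subspace of `ℝ³ × ℝ³`. -/
theorem stmt3 (lam β A B C : ℝ) (hlam : lam ≠ 0) (hβ : 0 < β)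
    (hA : 0 < A) (hB : 0 < B) (hC : 0 < C)
    (hKA : lam ^ 2 / β ^ 2 * (C - A) ≠ 1) (hKB : lam ^ 2 / β ^ 2 * (C - B) ≠ 1) :
    {p : (Fin 3 → ℝ) × (Fin 3 → ℝ) |
        -lam • crossProduct e3 (Iv A B C p.1)
            + crossProduct e3 ((lam * C) • p.1 - β ^ 2 • p.2) = 0 ∧
        -crossProduct p.1 e3 - lam • crossProduct e3 p.2 = 0}
      = {p | ∃ r s : ℝ, p = (r • e3, s • e3)} ∧
    ∃ W : Submodule ℝ ((Fin 3 → ℝ) × (Fin 3 → ℝ)),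
      (W : Set ((Fin 3 → ℝ) × (Fin 3 → ℝ))) = {p | ∃ r s : ℝ, p = (r • e3, s • e3)} ∧
      Module.finrank ℝ W = 2 := by
  have hβ2 : β ^ 2 ≠ 0 := pow_ne_zero 2 hβ.ne'
  have hKA' : lam ^ 2 * (C - A) - β ^ 2 ≠ 0 := by
    intro h; apply hKA; field_simp; linarith
  have hKB' : lam ^ 2 * (C - B) - β ^ 2 ≠ 0 := by
    intro h; apply hKB; field_simp; linarith
  constructor
  · ext ⟨w, z⟩
    simp only [Set.mem_setOf_eq]
    constructor
    · rintro ⟨h1, h2⟩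
      have e10 := congrFun h1 0
      have e11 := congrFun h1 1
      have e20 := congrFun h2 0
      have e21 := congrFun h2 1
      simp [e3, Iv, cross_apply] at e10 e11 e20 e21
      have hz1 : z 1 = 0 := by
        have h : (lam ^ 2 * (C - B) - β ^ 2) * z 1 = 0 := by
          linear_combination lam * (C - B) * e20 - e10
        exact (mul_eq_zero.1 h).resolve_left hKB'
      have hz0 : z 0 = 0 := by
        have h : (lam ^ 2 * (C - A) - β ^ 2) * z 0 = 0 := by
          linear_combination e11 - lam * (C - A) * e21
        exact (mul_eq_zero.1 h).resolve_left hKA'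
      have hw1 : w 1 = 0 := by rw [hz1] at e20; linarith
      have hw0 : w 0 = 0 := by rw [hz0] at e21; linarith
      refine ⟨w 2, z 2, ?_⟩
      refine Prod.ext ?_ ?_ <;> funext i <;> fin_cases i <;>
        simp [e3, hw0, hw1, hz0, hz1]
    · rintro ⟨r, s, h⟩
      obtain ⟨hw, hz⟩ := Prod.mk.injEq .. ▸ h
      subst hw; subst hz
      constructor <;> funext i <;> fin_cases i <;>
        simp [e3, Iv, cross_apply] <;> ring
  · refine ⟨LinearMap.range (((LinearMap.fst ℝ ℝ ℝ).smulRight e3).prod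
      ((LinearMap.snd ℝ ℝ ℝ).smulRight e3)), ?_, ?_⟩
    · ext p
      simp only [SetLike.mem_coe, LinearMap.mem_range, LinearMap.prod_apply, Pi.prod,
        LinearMap.smulRight_apply, LinearMap.fst_apply, LinearMap.snd_apply, Set.mem_setOf_eq]
      constructor
      · rintro ⟨⟨r, s⟩, rfl⟩; exact ⟨r, s, rfl⟩
      · rintro ⟨r, s, rfl⟩; exact ⟨⟨r, s⟩, rfl⟩
    · rw [LinearMap.finrank_range_of_inj, Module.finrank_prod, Module.finrank_self]
      intro x y hxy
      have h1 := congrFun (congrArg Prod.fst hxy) 2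
      have h2 := congrFun (congrArg Prod.snd hxy) 2
      simp [e3] at h1 h2
      exact Prod.ext h1 h2
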